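/- For all integers k ≥ 3, all d > 0 and every α ∈ [−1,1]∖{0}, the function β ∈ [0,∞) ↦ Λ_β(α) − Λ_β(0) is nondecreasing. In particular, if β_0 ≥ 0 is such that Λ_{β_0}(α) < Λ_{β_0}(0) for all α ∈ [−1,1]∖{0}, then Λ_β(α) < Λ_β(0) for all α ∈ [−1,1]∖{0} and all 0 ≤ β ≤ β_0. -/

import Mathlib

noncomputable section

open Finset Filter Real
open scoped Classical BigOperators

/-- The set of all `k`-element subsets of `Fin n` (the potential edges of a
`k`-uniform hypergraph on `[n]`). -/
def kSets (n k : ℕ) : Finset (Finset (Fin n)) :=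
  Finset.univ.filter fun e => e.card = k

/-- An edge is monochromatic under the 2-coloring `σ`. -/
def isMono {n : ℕ} (σ : Fin n → Bool) (e : Finset (Fin n)) : Prop :=
  ∀ v ∈ e, ∀ w ∈ e, σ v = σ w

/-- The number `E_H(σ)` of monochromatic edges of the hypergraph `H` under `σ`. -/
def monoCount {n : ℕ} (H : Finset (Finset (Fin n))) (σ : Fin n → Bool) : ℕ :=
  (H.filter fun e => isMono σ e).card

/-- The partition function `Z_β(H)`. -/
def Zp {n : ℕ} (β : ℝ) (H : Finset (Finset (Fin n))) : ℝ :=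
  ∑ τ : Fin n → Bool, Real.exp (-β * (monoCount H τ : ℝ))

/-- Probability of obtaining the hypergraph `H` in the binomial model `H_k(n,p)`. -/
def probHnp (n k : ℕ) (p : ℝ) (H : Finset (Finset (Fin n))) : ℝ :=
  if H ⊆ kSets n k then p ^ H.card * (1 - p) ^ ((kSets n k).card - H.card) else 0

/-- Expectation of `f` over `H_k(n,p)`. -/
def expHnp (n k : ℕ) (p : ℝ) (f : Finset (Finset (Fin n)) → ℝ) : ℝ :=
  ∑ H : Finset (Finset (Fin n)), probHnp n k p H * f H

/-- Probability of an event under `H_k(n,p)`. -/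
def prHnp (n k : ℕ) (p : ℝ) (A : Finset (Finset (Fin n)) → Prop) : ℝ :=
  expHnp n k p fun H => if A H then 1 else 0

/-- The edge probability `p = d / C(n-1,k-1)`. -/
def pEdge (n k : ℕ) (d : ℝ) : ℝ := d / ((n - 1).choose (k - 1) : ℝ)

/-- The first-moment value `ln 2 + (d/k)·ln(1 − 2^{1−k}(1 − e^{−β}))`. -/
def phiBound (k : ℕ) (d β : ℝ) : ℝ :=
  Real.log 2 + d / k * Real.log (1 - (2:ℝ) ^ ((1:ℤ) - k) * (1 - Real.exp (-β)))

/-- The sequence `n ↦ (1/n)·E[ln Z_β(H_k(n,p))]` with `p = d/C(n-1,k-1)`. -/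
def freeEnergySeq (k : ℕ) (d β : ℝ) (n : ℕ) : ℝ :=
  expHnp n k (pEdge n k d) (fun H => Real.log (Zp β H)) / n

/-- The function `Σ_{k,d}(β)`. -/
def SigmaKD (k : ℕ) (d β : ℝ) : ℝ :=
  (β + 1) * Real.exp (-β + k * Real.log 2) * Real.log 2
    - 2 * (d / k - (2:ℝ) ^ (k - 1) * Real.log 2 + Real.log 2)

/-- `m = ⌈dn/k⌉`. -/
def mOf (d : ℝ) (k n : ℕ) : ℕ := ⌈d * n / (k:ℝ)⌉₊

/-- Number of monochromatic edges, with multiplicity, of a multi-hypergraph given as a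
tuple of `m` edges. -/
def monoCountM {n m : ℕ} (H : Fin m → Finset (Fin n)) (σ : Fin n → Bool) : ℕ :=
  (Finset.univ.filter fun i : Fin m => isMono σ (H i)).card

/-- Partition function of a multi-hypergraph. -/
def ZpM {n m : ℕ} (β : ℝ) (H : Fin m → Finset (Fin n)) : ℝ :=
  ∑ τ : Fin n → Bool, Real.exp (-β * (monoCountM H τ : ℝ))

/-- Expectation over `H'_k(n,m)`: `m` edges chosen uniformly and independently with
replacement from all `k`-subsets of `[n]`. -/
def expHM (n k m : ℕ) (f : (Fin m → Finset (Fin n)) → ℝ) : ℝ :=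
  ∑ H : Fin m → Finset (Fin n),
    (∏ i : Fin m, if H i ∈ kSets n k then ((kSets n k).card : ℝ)⁻¹ else 0) * f H

/-- Probability of `H` under `H_k(n,m)`: `m` distinct edges chosen uniformly without
replacement. -/
def probHnm (n k m : ℕ) (H : Finset (Finset (Fin n))) : ℝ :=
  if H ⊆ kSets n k ∧ H.card = m then ((kSets n k).card.choose m : ℝ)⁻¹ else 0

/-- Expectation of `f` over `H_k(n,m)`. -/
def expHnm (n k m : ℕ) (f : Finset (Finset (Fin n)) → ℝ) : ℝ :=
  ∑ H : Finset (Finset (Fin n)), probHnm n k m H * f H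

/-- Number of vertices with color `true` (i.e. `|σ⁻¹(1)|`). -/
def numPlus {n : ℕ} (σ : Fin n → Bool) : ℕ :=
  (Finset.univ.filter fun v => σ v = true).card

/-- A coloring is balanced if `||σ⁻¹(1)| − n/2| ≤ √n`. -/
def isBalanced {n : ℕ} (σ : Fin n → Bool) : Prop :=
  |(numPlus σ : ℝ) - n / 2| ≤ Real.sqrt n

/-- The overlap `⟨σ,τ⟩ = ∑_v σ(v)τ(v)`. -/
def overlap {n : ℕ} (σ τ : Fin n → Bool) : ℤ :=
  ∑ _v ∈ Finset.univ.filter (fun v : Fin n => σ v = τ v), (1:ℤ) +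
    ∑ _v ∈ Finset.univ.filter (fun v : Fin n => σ v ≠ τ v), (-1:ℤ)

/-- The cluster size `C_β(H,σ)`. -/
def clusterSize {n : ℕ} (β : ℝ) (H : Finset (Finset (Fin n))) (σ : Fin n → Bool) : ℝ :=
  ∑ τ : Fin n → Bool,
    if 2 * (n:ℝ) / 3 ≤ (overlap σ τ : ℝ) then Real.exp (-β * (monoCount H τ : ℝ)) else 0

/-- The entropy function `H(z)`. -/
def entH (z : ℝ) : ℝ := -z * Real.log z - (1 - z) * Real.log (1 - z)

/-- The second-moment exponent `Λ_β(α)`. -/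
def Lam (k : ℕ) (d β α : ℝ) : ℝ :=
  entH ((1 + α) / 2) +
    d / k * Real.log (1 - (2:ℝ) ^ ((1:ℤ) - k) * (1 - Real.exp (-β)) *
      (2 - (1 - Real.exp (-β)) * ((1 + α) ^ k + (1 - α) ^ k) / 2 ^ k))

/-- The pair partition function `Z_β(α)` with `α = 2ν/n − 1`, i.e. overlap `2ν − n`. -/
def Zpair {n m : ℕ} (β : ℝ) (ν : ℕ) (H : Fin m → Finset (Fin n)) : ℝ :=
  ∑ σ : Fin n → Bool, ∑ τ : Fin n → Bool,
    if isBalanced σ ∧ isBalanced τ ∧ overlap σ τ = 2 * (ν:ℤ) - (n:ℤ) then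
      Real.exp (-β * ((monoCountM H σ : ℝ) + (monoCountM H τ : ℝ)))
    else 0

/-- Partition function of a multi-hypergraph restricted to balanced colorings. -/
def ZpMbal {n m : ℕ} (β : ℝ) (H : Fin m → Finset (Fin n)) : ℝ :=
  ∑ τ : Fin n → Bool,
    if isBalanced τ then Real.exp (-β * (monoCountM H τ : ℝ)) else 0

/-- `m₀ = 2^{1−k}·e^{−β}·m/(1 − 2^{1−k}(1 − e^{−β}))`. -/
def m0Of (k : ℕ) (β : ℝ) (m : ℕ) : ℝ :=
  (2:ℝ) ^ ((1:ℤ) - k) * Real.exp (-β) * m / (1 - (2:ℝ) ^ ((1:ℤ) - k) * (1 - Real.exp (-β)))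

/-- The probability `p₁` of a monochromatic edge in the planted model. -/
def p1Planted (n k : ℕ) (d β : ℝ) : ℝ :=
  Real.exp (-β) * d /
    ((1 - (2:ℝ) ^ ((1:ℤ) - k) * (1 - Real.exp (-β))) * ((n - 1).choose (k - 1) : ℝ))

/-- The probability `p₂` of a bichromatic edge in the planted model. -/
def p2Planted (n k : ℕ) (d β : ℝ) : ℝ :=
  d / ((1 - (2:ℝ) ^ ((1:ℤ) - k) * (1 - Real.exp (-β))) * ((n - 1).choose (k - 1) : ℝ))

/-- Conditional probability of the hypergraph `H` in the planted model given the planted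
coloring `σ`: monochromatic edges appear with probability `q1`, bichromatic ones with `q2`. -/
def probPlanted (n k : ℕ) (q1 q2 : ℝ) (σ : Fin n → Bool)
    (H : Finset (Finset (Fin n))) : ℝ :=
  if H ⊆ kSets n k then
    (∏ e ∈ (kSets n k).filter (fun e => isMono σ e), if e ∈ H then q1 else 1 - q1) *
      ∏ e ∈ (kSets n k).filter (fun e => ¬ isMono σ e), if e ∈ H then q2 else 1 - q2
  else 0

/-- Probability of an event in the planted model `(σ̂, G)`. -/
def prPlanted (n k : ℕ) (q1 q2 : ℝ)
    (A : (Fin n → Bool) → Finset (Finset (Fin n)) → Prop) : ℝ :=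
  ∑ σ : Fin n → Bool, ∑ H : Finset (Finset (Fin n)),
    ((2:ℝ)⁻¹) ^ n * probPlanted n k q1 q2 σ H * (if A σ H then 1 else 0)

/-- `β_crit(d,k)`, as an extended real (so `⊤ = ∞` if the set is empty). -/
def betaCrit (k : ℕ) (d : ℝ) : EReal :=
  sInf ((fun β : ℝ => (β : EReal)) ''
    {β : ℝ | 0 < β ∧ limsup (freeEnergySeq k d β) atTop < phiBound k d β})

/-- `v` supports the edge `e`: `v ∈ e` and every other vertex of `e` has color `−σ(v)`. -/
def supportsEdge {n : ℕ} (σ : Fin n → Bool) (v : Fin n) (e : Finset (Fin n)) : Prop :=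
  v ∈ e ∧ ∀ w ∈ e, w ≠ v → σ w = !(σ v)

/-- An edge `e` is `U`-endangered: all vertices of `U ∩ e` have the same color. -/
def endangered {n : ℕ} (σ : Fin n → Bool) (U : Finset (Fin n)) (e : Finset (Fin n)) : Prop :=
  ∀ v ∈ U ∩ e, ∀ w ∈ U ∩ e, σ v = σ w

/-- A set `V'` satisfying the two core conditions CR1 and CR2. -/
def goodSet {n : ℕ} (H : Finset (Finset (Fin n))) (σ : Fin n → Bool)
    (V' : Finset (Fin n)) : Prop :=
  (∀ v ∈ V', 100 ≤ (H.filter fun e => supportsEdge σ v e ∧ e ⊆ V').card) ∧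
    ∀ v ∈ V', (H.filter fun e => v ∈ e ∧ endangered σ V' e).card ≤ 10

/-- The core: the largest set satisfying CR1 and CR2 (the union of all such sets). -/
def coreSet {n : ℕ} (H : Finset (Finset (Fin n))) (σ : Fin n → Bool) : Finset (Fin n) :=
  Finset.univ.filter fun v => ∃ V', goodSet H σ V' ∧ v ∈ V'

/-- The backbone: vertices outside the core supporting an edge into the core and occurring
in no `({v} ∪ core)`-endangered edge. -/
def backboneSet {n : ℕ} (H : Finset (Finset (Fin n))) (σ : Fin n → Bool) : Finset (Fin n) :=
  Finset.univ.filter fun v => v ∉ coreSet H σ ∧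
    (∃ e ∈ H, supportsEdge σ v e ∧ e \ {v} ⊆ coreSet H σ) ∧
    ∀ e ∈ H, v ∈ e → ¬ endangered σ (insert v (coreSet H σ)) e

/-- The remaining vertices. -/
def restSet {n : ℕ} (H : Finset (Finset (Fin n))) (σ : Fin n → Bool) : Finset (Fin n) :=
  Finset.univ \ (coreSet H σ ∪ backboneSet H σ)

/-- The free vertices: vertices of the rest all of whose edges meet the core in a
bichromatic set. -/
def freeSet {n : ℕ} (H : Finset (Finset (Fin n))) (σ : Fin n → Bool) : Finset (Fin n) :=
  (restSet H σ).filter fun v => ∀ e ∈ H, v ∈ e →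
    ∃ w1 ∈ e ∩ coreSet H σ, ∃ w2 ∈ e ∩ coreSet H σ, σ w1 ≠ σ w2


lemma lam_arg_eq (k : ℕ) (hk : 3 ≤ k) (β α : ℝ) :
    (1 - (2:ℝ) ^ ((1:ℤ) - k) * (1 - Real.exp (-β)) *
      (2 - (1 - Real.exp (-β)) * ((1 + α) ^ k + (1 - α) ^ k) / 2 ^ k))
    = (1 - (2:ℝ) ^ ((1:ℤ) - k) * (1 - Real.exp (-β)))^2
      + ((2:ℝ) ^ ((1:ℤ) - k) * (1 - Real.exp (-β)))^2 *
        (((1 + α) ^ k + (1 - α) ^ k)/2 - 1) := by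
  set q : ℝ := (2:ℝ) ^ ((1:ℤ) - k) with hqdef
  have hq_pos : 0 < q := by positivity
  have hq2 : q * (2:ℝ) ^ k = 2 := by
    rw [hqdef, ← Real.rpow_intCast, ← Real.rpow_natCast,
      ← Real.rpow_add (by norm_num : (0:ℝ) < 2)]
    norm_num
  have h2k : (2:ℝ) ^ k = 2 / q := by
    field_simp
    linarith [hq2]
  rw [h2k]
  field_simp
  ring

set_option maxHeartbeats 1000000 in
lemma lam_mono_aux (k : ℕ) (hk : 3 ≤ k) (d : ℝ) (hd : 0 < d)
    (α : ℝ) (hα : α ∈ Set.Icc (-1:ℝ) 1) (β1 β2 : ℝ) (h1 : 0 ≤ β1) (h12 : β1 ≤ β2) :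
    Lam k d β1 α - Lam k d β1 0 ≤ Lam k d β2 α - Lam k d β2 0 := by
  obtain ⟨hαl, hαr⟩ := hα
  set q : ℝ := (2:ℝ) ^ ((1:ℤ) - k) with hqdef
  set A : ℝ := (1 + α) ^ k + (1 - α) ^ k with hAdef
  set c1 : ℝ := q * (1 - Real.exp (-β1)) with hc1def
  set c2 : ℝ := q * (1 - Real.exp (-β2)) with hc2def
  have hq_pos : 0 < q := by rw [hqdef]; positivity
  have hq2 : q * (2:ℝ) ^ k = 2 := by
    rw [hqdef, ← Real.rpow_intCast, ← Real.rpow_natCast,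
      ← Real.rpow_add (by norm_num : (0:ℝ) < 2)]
    norm_num
  have h8 : (8:ℝ) ≤ (2:ℝ) ^ k := by
    calc (8:ℝ) = 2 ^ 3 := by norm_num
    _ ≤ 2 ^ k := pow_le_pow_right₀ (by norm_num) hk
  have hq14 : q ≤ 1/4 := by nlinarith
  have hA : 2 ≤ A := by
    have hconv := (convexOn_pow k).2 (Set.mem_Ici.2 (by linarith : (0:ℝ) ≤ 1 + α))
      (Set.mem_Ici.2 (by linarith : (0:ℝ) ≤ 1 - α))
      (by norm_num : (0:ℝ) ≤ 1/2) (by norm_num : (0:ℝ) ≤ 1/2) (by norm_num)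
    simp only [smul_eq_mul] at hconv
    have h1' : (1:ℝ)/2 * (1 + α) + 1/2 * (1 - α) = 1 := by ring
    rw [h1', one_pow] at hconv
    rw [hAdef]
    linarith
  have he1 : Real.exp (-β1) ≤ 1 := Real.exp_le_one_iff.2 (by linarith)
  have he2 : Real.exp (-β2) ≤ 1 := Real.exp_le_one_iff.2 (by linarith)
  have he12 : Real.exp (-β2) ≤ Real.exp (-β1) := Real.exp_le_exp.2 (by linarith)
  have hc1_nonneg : 0 ≤ c1 := by
    rw [hc1def]; exact mul_nonneg hq_pos.le (by linarith)
  have hc12 : c1 ≤ c2 := by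
    rw [hc1def, hc2def]
    exact mul_le_mul_of_nonneg_left (by linarith) hq_pos.le
  have hc2_lt : c2 ≤ 1/4 := by
    have h' : c2 ≤ q * 1 := by
      rw [hc2def]
      exact mul_le_mul_of_nonneg_left (by linarith [Real.exp_pos (-β2)]) hq_pos.le
    linarith
  have hL1 : Lam k d β1 α
      = entH ((1 + α)/2) + d / k * Real.log ((1 - c1)^2 + c1^2 * (A/2 - 1)) := by
    rw [Lam, lam_arg_eq k hk β1 α]
  have hL2 : Lam k d β2 α
      = entH ((1 + α)/2) + d / k * Real.log ((1 - c2)^2 + c2^2 * (A/2 - 1)) := by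
    rw [Lam, lam_arg_eq k hk β2 α]
  have hA0 : ((1 + (0:ℝ)) ^ k + (1 - 0) ^ k) = 2 := by norm_num
  have hL10 : Lam k d β1 0 = entH ((1 + (0:ℝ))/2) + d / k * Real.log ((1 - c1)^2) := by
    rw [Lam, lam_arg_eq k hk β1 0, hA0]
    norm_num
    exact Or.inl rfl
  have hL20 : Lam k d β2 0 = entH ((1 + (0:ℝ))/2) + d / k * Real.log ((1 - c2)^2) := by
    rw [Lam, lam_arg_eq k hk β2 0, hA0]
    norm_num
    exact Or.inl rfl
  clear_value c2 c1 A q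
  clear hqdef hAdef hc1def hc2def hq2 h8 he1 he2 he12
  set D1 : ℝ := (1 - c1)^2 with hD1def
  set D2 : ℝ := (1 - c2)^2 with hD2def
  set N1 : ℝ := D1 + c1^2 * (A/2 - 1) with hN1def
  set N2 : ℝ := D2 + c2^2 * (A/2 - 1) with hN2def
  clear_value N2 N1 D2 D1
  have hc1_lt : c1 ≤ 1/4 := le_trans hc12 hc2_lt
  have hD1_pos : 0 < D1 := by rw [hD1def]; exact pow_pos (by linarith) 2
  have hD2_pos : 0 < D2 := by rw [hD2def]; exact pow_pos (by linarith) 2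
  have hX1 : 0 ≤ c1^2 * (A/2 - 1) := mul_nonneg (sq_nonneg c1) (by linarith)
  have hX2 : 0 ≤ c2^2 * (A/2 - 1) := mul_nonneg (sq_nonneg c2) (by linarith)
  have hN1_pos : 0 < N1 := by rw [hN1def]; linarith
  have hN2_pos : 0 < N2 := by rw [hN2def]; linarith
  rw [hL1, hL2, hL10, hL20]
  have hdk : 0 < d / (k:ℝ) := div_pos hd (by exact_mod_cast (by omega : 0 < k))
  have hkey : Real.log N1 - Real.log D1 ≤ Real.log N2 - Real.log D2 := by
    rw [← Real.log_div (ne_of_gt hN1_pos) (ne_of_gt hD1_pos),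
      ← Real.log_div (ne_of_gt hN2_pos) (ne_of_gt hD2_pos)]
    apply Real.log_le_log (div_pos hN1_pos hD1_pos)
    rw [div_le_div_iff₀ hD1_pos hD2_pos]
    have hfac : N2 * D1 - N1 * D2 = (A/2 - 1) * (c2 - c1) * (c1 + c2 - 2*c1*c2) := by
      rw [hN1def, hN2def, hD1def, hD2def]; ring
    have hc2_nonneg : 0 ≤ c2 := le_trans hc1_nonneg hc12
    have hsum : 0 ≤ c1 + c2 - 2*c1*c2 := by
      have g1 : 0 ≤ c1 * (1 - c2) := mul_nonneg hc1_nonneg (by linarith)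
      have g2 : 0 ≤ c2 * (1 - c1) := mul_nonneg hc2_nonneg (by linarith)
      nlinarith
    have hprod : 0 ≤ (A/2 - 1) * (c2 - c1) * (c1 + c2 - 2*c1*c2) :=
      mul_nonneg (mul_nonneg (by linarith) (by linarith)) hsum
    linarith
  have hfin := mul_le_mul_of_nonneg_left hkey (le_of_lt hdk)
  rw [mul_sub, mul_sub] at hfin
  linarith

theorem statement_12 (k : ℕ) (hk : 3 ≤ k) (d : ℝ) (hd : 0 < d) :
    (∀ α ∈ Set.Icc (-1:ℝ) 1, α ≠ 0 →
      ∀ β1 β2 : ℝ, 0 ≤ β1 → β1 ≤ β2 →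
        Lam k d β1 α - Lam k d β1 0 ≤ Lam k d β2 α - Lam k d β2 0) ∧
    (∀ β0 : ℝ, 0 ≤ β0 →
      (∀ α ∈ Set.Icc (-1:ℝ) 1, α ≠ 0 → Lam k d β0 α < Lam k d β0 0) →
      ∀ β : ℝ, 0 ≤ β → β ≤ β0 →
        ∀ α ∈ Set.Icc (-1:ℝ) 1, α ≠ 0 → Lam k d β α < Lam k d β 0) := by
  constructor
  · intro α hα _ β1 β2 h1 h12
    exact lam_mono_aux k hk d hd α hα β1 β2 h1 h12
  · intro β0 hβ0 hlt β hβ hββ0 α hα hα0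
    have h := lam_mono_aux k hk d hd α hα β β0 hβ hββ0
    have h2 := hlt α hα hα0
    linarith
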